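/- Let U be a commutative K-algebra and ∂₁,…,∂ₙ pairwise commuting K-linear derivations of U. On A = (Fin n → U) define two bilinear multiplications by (u∂ᵢ)∘(v∂ⱼ) = v·∂ⱼ(u)·∂ᵢ and (u∂ᵢ)∗(v∂ⱼ) = ∂ᵢ(u)·v·∂ⱼ (i.e., (f∘g)ᵢ = Σⱼ gⱼ·∂ⱼ(fᵢ) and f∗g = (Σᵢ ∂ᵢ(fᵢ))·g). Then for all a,b,c ∈ A the following five identities hold: (1) a∘(b∘c) − (a∘b)∘c − a∘(c∘b) + (a∘c)∘b = 0; (2) a∗(b∗c) − b∗(a∗c) = 0; (3) a∘(b∗c) − b∗(a∘c) = 0; (4) (a∗b − b∗a − a∘b + b∘a)∗c = 0; (5) (a∘b − b∘a)∗c + a∗(c∘b) − (a∗c)∘b − b∗(c∘a) + (b∗c)∘a = 0. -/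
import Mathlib


open Finset

/-- The multiplication `(u∂ᵢ)∘(v∂ⱼ) = v·∂ⱼ(u)·∂ᵢ`, i.e. `(f∘g)ᵢ = Σⱼ gⱼ·∂ⱼ(fᵢ)`. -/
def wittMul {K U : Type*} [CommRing K] [CommRing U] [Algebra K U]
    (n : ℕ) (D : Fin n → U →ₗ[K] U) (f g : Fin n → U) : Fin n → U :=
  fun i => ∑ j, g j * D j (f i)

/-- The second multiplication `(u∂ᵢ)∗(v∂ⱼ) = ∂ᵢ(u)·v·∂ⱼ`, i.e.
`f∗g = (Σᵢ ∂ᵢ(fᵢ))·g`. -/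
def wittStar {K U : Type*} [CommRing K] [CommRing U] [Algebra K U]
    (n : ℕ) (D : Fin n → U →ₗ[K] U) (f g : Fin n → U) : Fin n → U :=
  fun j => (∑ i, D i (f i)) * g j

/-- A double sum of a difference `H j k - H k j` vanishes. -/
lemma sum_skew {U : Type*} [AddCommGroup U] {n : ℕ} (H : Fin n → Fin n → U) :
    ∑ j : Fin n, ∑ k : Fin n, (H j k - H k j) = 0 := by
  simp only [Finset.sum_sub_distrib]
  rw [Finset.sum_comm]
  exact sub_self _

/-- The half-Witt algebra with its two multiplications `∘` and `∗`
satisfies the five identities of the paper. -/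
theorem wittMul_wittStar_identities
    {K U : Type*} [CommRing K] [CommRing U] [Algebra K U]
    (n : ℕ) (D : Fin n → U →ₗ[K] U)
    (hleib : ∀ (i : Fin n) (u v : U), D i (u * v) = D i u * v + u * D i v)
    (hcomm : ∀ (i j : Fin n) (u : U), D i (D j u) = D j (D i u)) :
    ∀ a b c : Fin n → U,
      (wittMul n D a (wittMul n D b c) - wittMul n D (wittMul n D a b) c
        - wittMul n D a (wittMul n D c b) + wittMul n D (wittMul n D a c) b = 0) ∧
      (wittStar n D a (wittStar n D b c) - wittStar n D b (wittStar n D a c) = 0) ∧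
      (wittMul n D a (wittStar n D b c) - wittStar n D b (wittMul n D a c) = 0) ∧
      (wittStar n D (wittStar n D a b - wittStar n D b a
        - wittMul n D a b + wittMul n D b a) c = 0) ∧
      (wittStar n D (wittMul n D a b - wittMul n D b a) c
        + wittStar n D a (wittMul n D c b) - wittMul n D (wittStar n D a c) b
        - wittStar n D b (wittMul n D c a) + wittMul n D (wittStar n D b c) a = 0) := by
  intro a b c
  refine ⟨?_, ?_, ?_, ?_, ?_⟩
  · -- identity (1)
    funext i
    simp only [wittMul, Pi.sub_apply, Pi.add_apply, Pi.zero_apply]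
    simp only [map_sum, hleib, Finset.mul_sum, Finset.sum_mul, mul_add, add_mul,
      sub_mul, mul_sub]
    simp only [← Finset.sum_sub_distrib, ← Finset.sum_add_distrib]
    calc _ = ∑ j : Fin n, ∑ k : Fin n,
        ((c k * D k (b j) * D j (a i) - b k * D k (c j) * D j (a i)
            + b j * c k * D j (D k (a i)))
          - (c j * D j (b k) * D k (a i) - b j * D j (c k) * D k (a i)
            + b k * c j * D k (D j (a i)))) := by
          refine Finset.sum_congr rfl fun j _ => Finset.sum_congr rfl fun k _ => ?_
          simp only [hcomm k j]
          ring
      _ = 0 := sum_skew _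
  · -- identity (2)
    funext j
    simp only [wittStar, Pi.sub_apply, Pi.zero_apply]
    ring
  · -- identity (3)
    funext i
    simp only [wittMul, wittStar, Pi.sub_apply, Pi.zero_apply, Finset.mul_sum]
    rw [← Finset.sum_sub_distrib]
    exact Finset.sum_eq_zero fun j _ => by ring
  · -- identity (4)
    funext j
    simp only [wittMul, wittStar, Pi.sub_apply, Pi.add_apply, Pi.zero_apply]
    simp only [map_sub, map_add, map_sum, hleib, Finset.mul_sum, Finset.sum_mul,
      mul_add, add_mul, sub_mul, mul_sub]
    simp only [← Finset.sum_sub_distrib, ← Finset.sum_add_distrib]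
    calc _ = ∑ x : Fin n, ∑ k : Fin n,
        ((D x (D k (a k)) * b x * c j + D k (a k) * D x (b x) * c j
            + D x (a k) * D k (b x) * c j + a k * D x (D k (b x)) * c j)
          - (D k (D x (a x)) * b k * c j + D x (a x) * D k (b k) * c j
            + D k (a x) * D x (b k) * c j + a x * D k (D x (b k)) * c j)) := by
          refine Finset.sum_congr rfl fun x _ => Finset.sum_congr rfl fun k _ => ?_
          simp only [hcomm k x]
          ring
      _ = 0 := sum_skew _
  · -- identity (5)
    funext i
    simp only [wittMul, wittStar, Pi.sub_apply, Pi.add_apply, Pi.zero_apply]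
    simp only [map_sub, map_add, map_sum, hleib, Finset.mul_sum, Finset.sum_mul,
      mul_add, add_mul, sub_mul, mul_sub]
    simp only [← Finset.sum_sub_distrib, ← Finset.sum_add_distrib]
    calc _ = ∑ j : Fin n, ∑ k : Fin n,
        ((D j (b k) * D k (a j) * c i + b k * D j (D k (a j)) * c i
            + a j * D j (D k (b k)) * c i)
          - (D k (b j) * D j (a k) * c i + b j * D k (D j (a k)) * c i
            + a k * D k (D j (b j)) * c i)) := by
          refine Finset.sum_congr rfl fun j _ => Finset.sum_congr rfl fun k _ => ?_
          simp only [hcomm k j]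
          ring
      _ = 0 := sum_skew _
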